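/- Let n ≥ 1 and r ≥ 0, and let D = {λ ∈ ℤ^n : |λ_1| + ⋯ + |λ_n| ≤ r}, viewed as a finite set of points of ℚ^n. Then the vanishing ideal in ℚ[X_1,…,X_n] of D equals the ideal generated by the polynomials (X_i + r)(X_i + r − 1)(X_i + r − 2)⋯(X_i − r) for i = 1,…,n, together with the polynomials (J_ε + r)(J_ε + r − 1)(J_ε + r − 2)⋯(J_ε − r) for each of the 2^n sign vectors ε ∈ {±1}^n, where J_ε = ε_1 X_1 + ⋯ + ε_n X_n. -/

import Mathlib

open Polynomial in
lemma prod_X_sub_dvd {F A : Type*} [Field F] [CommRing A] (ψ : F →+* A) (T : Finset F)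
    (p : A[X]) (h : ∀ a ∈ T, p.eval (ψ a) = 0) :
    (∏ a ∈ T, (X - C (ψ a))) ∣ p := by
  classical
  induction T using Finset.induction_on generalizing p with
  | empty => simpa using dvd_refl p
  | @insert a T ha ih =>
    obtain ⟨q, rfl⟩ := dvd_iff_isRoot.mpr (h a (Finset.mem_insert_self a T))
    rw [Finset.prod_insert ha]
    refine mul_dvd_mul_left _ (ih q fun b hb => ?_)
    have hb' := h b (Finset.mem_insert_of_mem hb)
    have hba : b - a ≠ 0 := sub_ne_zero.mpr (by rintro rfl; exact ha hb)
    have hu : IsUnit (ψ b - ψ a) := by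
      rw [← map_sub]
      exact IsUnit.of_mul_eq_one (ψ (b-a)⁻¹) (by rw [← map_mul, mul_inv_cancel₀ hba, map_one])
    rw [eval_mul, eval_sub, eval_X, eval_C] at hb'
    exact (hu.mul_left_eq_zero).mp (by rw [mul_comm]; exact hb')

open MvPolynomial in
lemma finSuccEquiv_symm_C' {F : Type*} [CommRing F] (n : ℕ) (g : MvPolynomial (Fin n) F) :
    (finSuccEquiv F n).symm (Polynomial.C g) = rename Fin.succ g := by
  apply (finSuccEquiv F n).injective
  rw [AlgEquiv.apply_symm_apply]
  induction g using MvPolynomial.induction_on with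
  | C a => simp [finSuccEquiv_apply]
  | add p q hp hq => simp [map_add, hp, hq]
  | mul_X p i hp => simp [map_mul, hp, finSuccEquiv_X_succ]

open MvPolynomial in
lemma grid_mem_span {F : Type*} [Field F] (n : ℕ) (S : Fin n → Finset F)
    (f : MvPolynomial (Fin n) F)
    (hf : ∀ x : Fin n → F, (∀ i, x i ∈ S i) → eval x f = 0) :
    f ∈ Ideal.span (Set.range fun i => ∏ a ∈ S i, (X i - C a)) := by
  classical
  induction n with
  | zero =>
    obtain ⟨a, rfl⟩ := C_surjective (Fin 0) f
    have := hf (fun i => i.elim0) (fun i => i.elim0)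
    rw [eval_C] at this
    simp [this]
  | succ n IH =>
    set φ := finSuccEquiv F n with hφ
    set q : Polynomial (MvPolynomial (Fin n) F) := φ f with hq
    set J' : Ideal (MvPolynomial (Fin n) F) := Ideal.span (Set.range fun i : Fin n => ∏ a ∈ S i.succ, (X i - C a))
      with hJ'
    -- evaluations of q at constants vanish on subgrid
    have hgA : ∀ a ∈ S 0, q.eval (MvPolynomial.C a) ∈ J' := by
      intro a ha
      refine IH (fun i => S i.succ) _ (fun x hx => ?_)
      have h1 : eval x (q.eval (MvPolynomial.C a)) = eval (Fin.cons a x) f := by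
        rw [eval_eq_eval_mv_eval' x a f, ← hq, Polynomial.eval_map,
          ← Polynomial.eval₂_at_apply (eval x) , eval_C]
      rw [h1]
      refine hf _ (fun i => ?_)
      refine Fin.cases ?_ (fun j => ?_) i
      · simpa using ha
      · simpa using hx j
    set π : MvPolynomial (Fin n) F →+* MvPolynomial (Fin n) F ⧸ J' := Ideal.Quotient.mk J' with hπ
    set P0 : Polynomial (MvPolynomial (Fin n) F) := ∏ a ∈ S 0, (Polynomial.X - Polynomial.C (MvPolynomial.C a)) with hP0
    have hdvd : P0.map π ∣ q.map π := by
      have := prod_X_sub_dvd (π.comp MvPolynomial.C) (S 0) (q.map π) ?_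
      · convert this using 1
        rw [hP0, Polynomial.map_prod]
        simp
      · intro a ha
        rw [RingHom.comp_apply, Polynomial.eval_map, Polynomial.eval₂_at_apply]
        exact Ideal.Quotient.eq_zero_iff_mem.mpr (hgA a ha)
    obtain ⟨u, hu⟩ := hdvd
    obtain ⟨U, rfl⟩ := Polynomial.map_surjective π Ideal.Quotient.mk_surjective u
    set d : Polynomial (MvPolynomial (Fin n) F) := q - P0 * U with hd
    have hdc : ∀ k, d.coeff k ∈ J' := by
      intro k
      have : (d.map π).coeff k = 0 := by
        rw [hd, Polynomial.map_sub, Polynomial.map_mul, hu]; ring_nf; simp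
      rw [Polynomial.coeff_map] at this
      exact Ideal.Quotient.eq_zero_iff_mem.mp this
    set J : Ideal (MvPolynomial (Fin (n+1)) F) :=
      Ideal.span (Set.range fun i : Fin (n+1) => ∏ a ∈ S i, (X i - C a)) with hJ
    have hren : ∀ g ∈ J', rename (Fin.succ) g ∈ J := by
      intro g hg
      have h2 : Ideal.map (rename (Fin.succ : Fin n → Fin (n+1))).toRingHom J' ≤ J := by
        rw [hJ', Ideal.map_span, Ideal.span_le]
        rintro _ ⟨_, ⟨i, rfl⟩, rfl⟩
        apply Ideal.subset_span
        refine ⟨i.succ, ?_⟩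
        rw [map_prod]; exact Finset.prod_congr rfl fun a _ => by simp [AlgHom.toRingHom_eq_coe, RingHom.coe_coe, rename_X, rename_C]
      exact h2 (Ideal.mem_map_of_mem _ hg)
    have hsymmX : φ.symm Polynomial.X = X 0 := by
      apply φ.injective; rw [AlgEquiv.apply_symm_apply, hφ, finSuccEquiv_X_zero]
    have hsymmCC : ∀ a : F, φ.symm (Polynomial.C (MvPolynomial.C a)) = MvPolynomial.C a := by
      intro a; rw [hφ, finSuccEquiv_symm_C', rename_C]
    have h3 : φ.symm P0 ∈ J := by
      apply Ideal.subset_span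
      refine ⟨0, ?_⟩
      rw [hP0, map_prod]
      refine Finset.prod_congr rfl (fun a _ => ?_)
      rw [map_sub, hsymmX, hsymmCC]
    have h4 : φ.symm d ∈ J := by
      have : φ.symm d = d.sum fun k a => rename Fin.succ a * (X 0) ^ k := by
        conv_lhs => rw [← Polynomial.sum_C_mul_X_pow_eq d]
        rw [Polynomial.sum, map_sum]
        refine Finset.sum_congr rfl (fun k _ => ?_)
        rw [map_mul, map_pow, hsymmX, hφ, finSuccEquiv_symm_C']
      rw [this, Polynomial.sum]
      exact Ideal.sum_mem _ fun k _ => Ideal.mul_mem_right _ _ (hren _ (hdc k))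
    have h5 : f = φ.symm (P0 * U) + φ.symm d := by
      rw [← map_add, hd]; ring_nf
      exact (φ.symm_apply_apply f).symm
    rw [h5]
    exact J.add_mem (by rw [map_mul]; exact Ideal.mul_mem_right _ _ h3) h4

lemma prod_reindex {A : Type*} [CommMonoid A] (r : ℕ) (g : ℤ → A) :
    ∏ j ∈ Finset.range (2*r+1), g ((r:ℤ) - (j:ℤ)) = ∏ k ∈ Finset.Icc (-(r:ℤ)) (r:ℤ), g k := by
  refine Finset.prod_nbij' (fun j => (r:ℤ) - (j:ℤ)) (fun k => ((r:ℤ) - k).toNat) ?_ ?_ ?_ ?_ ?_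
  · intro j hj
    simp only [Finset.mem_range] at hj
    simp only [Finset.mem_Icc]
    omega
  · intro k hk
    simp only [Finset.mem_Icc] at hk
    simp only [Finset.mem_range]
    omega
  · intro j hj; simp only [Finset.mem_range] at hj; beta_reduce; omega
  · intro k hk; simp only [Finset.mem_Icc] at hk; beta_reduce; omega
  · intro j _; rfl

open MvPolynomial in
/-- Let `D = {λ ∈ ℤ^n : |λ_1| + ⋯ + |λ_n| ≤ r}`, viewed as points of
`ℚ^n`.  Then the vanishing ideal of `D` in `ℚ[X₁,…,Xₙ]` equals the ideal generated by
`(X_i + r)(X_i + r − 1)⋯(X_i − r)` for `i = 1,…,n`, together with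
`(J_ε + r)(J_ε + r − 1)⋯(J_ε − r)` for each sign vector `ε ∈ {±1}^n`, where
`J_ε = ε₁X₁ + ⋯ + εₙXₙ`. -/
theorem stmt12 (n r : ℕ) (hn : 1 ≤ n) :
    MvPolynomial.vanishingIdeal ℚ
        ((fun lam : Fin n → ℤ => fun a : Fin n => (lam a : ℚ)) ''
          {lam : Fin n → ℤ | (∑ a, |lam a|) ≤ (r : ℤ)}) =
      Ideal.span
        ((Set.range fun i : Fin n =>
            ∏ j ∈ Finset.range (2 * r + 1),
              (MvPolynomial.X i - MvPolynomial.C ((r : ℚ) - (j : ℚ)))) ∪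
          (fun eps : Fin n → ℤ =>
              ∏ j ∈ Finset.range (2 * r + 1),
                ((∑ a, MvPolynomial.C (eps a : ℚ) * MvPolynomial.X a) -
                  MvPolynomial.C ((r : ℚ) - (j : ℚ)))) ''
            {eps : Fin n → ℤ | ∀ a, eps a = 1 ∨ eps a = -1}) := by
  classical
  set S : Finset ℤ := Finset.Icc (-(r:ℤ)) (r:ℤ) with hS
  -- statement generators rewritten over Icc
  have pEq : ∀ P : MvPolynomial (Fin n) ℚ,
      (∏ j ∈ Finset.range (2*r+1), (P - MvPolynomial.C ((r:ℚ) - (j:ℚ)))) =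
      ∏ k ∈ S, (P - MvPolynomial.C (k:ℚ)) := by
    intro P
    rw [← prod_reindex r (fun k => P - MvPolynomial.C (k:ℚ))]
    refine Finset.prod_congr rfl fun j _ => ?_
    push_cast
    ring_nf
  apply le_antisymm
  · -- hard direction
    intro f hf
    rw [mem_vanishingIdeal_iff] at hf
    set Jspan := Ideal.span
        ((Set.range fun i : Fin n =>
            ∏ j ∈ Finset.range (2 * r + 1),
              (MvPolynomial.X i - MvPolynomial.C ((r : ℚ) - (j : ℚ)))) ∪
          (fun eps : Fin n → ℤ =>
              ∏ j ∈ Finset.range (2 * r + 1),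
                ((∑ a, MvPolynomial.C (eps a : ℚ) * MvPolynomial.X a) -
                  MvPolynomial.C ((r : ℚ) - (j : ℚ)))) ''
            {eps : Fin n → ℤ | ∀ a, eps a = 1 ∨ eps a = -1}) with hJspan
    set Sq : Fin n → Finset ℚ := fun _ => S.image (fun k : ℤ => (k:ℚ)) with hSq
    -- grid → membership
    have hgrid : ∀ g : MvPolynomial (Fin n) ℚ,
        (∀ x : Fin n → ℚ, (∀ i, x i ∈ Sq i) → eval x g = 0) → g ∈ Jspan := by
      intro g hg
      have h1 := grid_mem_span n Sq g hg
      refine Ideal.span_le.mpr ?_ h1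
      rintro _ ⟨i, rfl⟩
      apply Ideal.subset_span
      left
      refine ⟨i, ?_⟩
      beta_reduce
      rw [pEq, hSq]
      rw [Finset.prod_image (fun a _ b _ h => by exact_mod_cast h)]
    -- the interpolation polynomials
    set e : (Fin n → ℤ) → MvPolynomial (Fin n) ℚ := fun μ =>
      ∏ i, ∏ k ∈ S.erase (μ i),
        (MvPolynomial.C (((μ i : ℚ) - (k:ℚ))⁻¹) * (MvPolynomial.X i - MvPolynomial.C (k:ℚ)))
      with he
    have he1 : ∀ μ : Fin n → ℤ, eval (fun i => (μ i : ℚ)) (e μ) = 1 := by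
      intro μ
      rw [he]
      rw [map_prod]
      refine Finset.prod_eq_one fun i _ => ?_
      rw [map_prod]
      refine Finset.prod_eq_one fun k hk => ?_
      have hk' : (k:ℚ) ≠ (μ i : ℚ) := by
        exact_mod_cast fun h => (Finset.mem_erase.mp hk).1 (by exact_mod_cast h)
      simp only [map_mul, map_sub, eval_C, eval_X]
      rw [inv_mul_cancel₀ (sub_ne_zero.mpr (Ne.symm hk'))]
    have he0 : ∀ μ ν : Fin n → ℤ, (∀ i, ν i ∈ S) → ν ≠ μ →
        eval (fun i => (ν i : ℚ)) (e μ) = 0 := by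
      intro μ ν hν hne
      obtain ⟨i, hi⟩ : ∃ i, ν i ≠ μ i := by
        by_contra h; push_neg at h; exact hne (funext h)
      rw [he, map_prod]
      refine Finset.prod_eq_zero (Finset.mem_univ i) ?_
      rw [map_prod]
      refine Finset.prod_eq_zero (Finset.mem_erase.mpr ⟨hi, hν i⟩) ?_
      simp
    -- Claim A
    have hA : ∀ μ : Fin n → ℤ, (∀ i, μ i ∈ S) → (r:ℤ) < ∑ i, |μ i| → e μ ∈ Jspan := by
      intro μ hμ hbig
      set ε : Fin n → ℤ := fun i => if 0 ≤ μ i then 1 else -1 with hε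
      have hεmem : ∀ a, ε a = 1 ∨ ε a = -1 := fun a => by
        rw [hε]; beta_reduce; split <;> simp
      set gε : MvPolynomial (Fin n) ℚ :=
        ∏ j ∈ Finset.range (2*r+1),
          ((∑ a, MvPolynomial.C ((ε a : ℤ) : ℚ) * MvPolynomial.X a)
            - MvPolynomial.C ((r:ℚ) - (j:ℚ))) with hgε
      have hgεJ : gε ∈ Jspan := Ideal.subset_span (Or.inr ⟨ε, hεmem, rfl⟩)
      set m : ℤ := ∑ i, |μ i| with hm
      have hevalg : ∀ ν : Fin n → ℤ, eval (fun i => (ν i:ℚ)) gε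
          = ∏ k ∈ S, (((∑ a, ε a * ν a : ℤ):ℚ) - (k:ℚ)) := by
        intro ν
        rw [hgε, pEq, map_prod]
        refine Finset.prod_congr rfl fun k _ => ?_
        rw [map_sub, eval_C, map_sum]
        push_cast
        refine congrArg (· - (k:ℚ)) ?_
        exact Finset.sum_congr rfl fun a _ => by simp
      have hsumε : ∑ a, ε a * μ a = m := by
        rw [hm]
        refine Finset.sum_congr rfl fun a _ => ?_
        rw [hε]; beta_reduce
        split
        · rename_i h; rw [abs_of_nonneg h, one_mul]
        · rename_i h; rw [abs_of_neg (lt_of_not_ge h)]; ring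
      set c : ℚ := ∏ k ∈ S, ((m:ℚ) - (k:ℚ)) with hc
      have hgL : eval (fun i => (μ i:ℚ)) gε = c := by
        rw [hevalg, hsumε, hc]
      have hcne : c ≠ 0 := by
        rw [hc]
        refine Finset.prod_ne_zero_iff.mpr fun k hk => ?_
        rw [hS, Finset.mem_Icc] at hk
        have hkm : k ≠ m := by omega
        have : (k:ℚ) ≠ (m:ℚ) := fun h => hkm (by exact_mod_cast h)
        exact sub_ne_zero.mpr (Ne.symm this)
      set h : MvPolynomial (Fin n) ℚ := e μ * gε * MvPolynomial.C c⁻¹ with hh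
      have hhJ : h ∈ Jspan := by
        rw [hh]
        exact Ideal.mul_mem_right _ _ (Ideal.mul_mem_left _ _ hgεJ)
      have heμh : e μ - h ∈ Jspan := by
        refine hgrid _ fun x hx => ?_
        choose ν hνS hνx using fun i => Finset.mem_image.mp (hx i)
        have hxν : x = fun i => (ν i : ℚ) := funext fun i => (hνx i).symm
        subst hxν
        rw [map_sub, hh, map_mul, map_mul, eval_C]
        by_cases hcase : ν = μ
        · subst hcase
          rw [he1, hgL, one_mul, mul_inv_cancel₀ hcne, sub_self]
        · rw [he0 μ ν hνS hcase]
          ring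
      have := Jspan.add_mem heμh hhJ
      simpa using this
    -- final assembly
    set B : Finset (Fin n → ℤ) :=
      (Fintype.piFinset fun _ : Fin n => S).filter (fun μ => (r:ℤ) < ∑ i, |μ i|) with hB
    have hsum : (∑ μ ∈ B, MvPolynomial.C (eval (fun i => (μ i : ℚ)) f) * e μ) ∈ Jspan := by
      refine Ideal.sum_mem _ fun μ hμ => ?_
      rw [hB, Finset.mem_filter, Fintype.mem_piFinset] at hμ
      exact Ideal.mul_mem_left _ _ (hA μ hμ.1 hμ.2)
    have hf' : f - (∑ μ ∈ B, MvPolynomial.C (eval (fun i => (μ i : ℚ)) f) * e μ) ∈ Jspan := by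
      refine hgrid _ fun x hx => ?_
      choose μ hμS hμx using fun i => Finset.mem_image.mp (hx i)
      have hxμ : x = fun i => (μ i : ℚ) := funext fun i => (hμx i).symm
      subst hxμ
      rw [map_sub, map_sum]
      by_cases hcase : (r:ℤ) < ∑ i, |μ i|
      · have hμB : μ ∈ B := by
          rw [hB, Finset.mem_filter, Fintype.mem_piFinset]; exact ⟨hμS, hcase⟩
        rw [Finset.sum_eq_single_of_mem μ hμB ?_]
        · rw [map_mul, eval_C, he1, mul_one, sub_self]
        · intro ν _ hνμ
          rw [map_mul, he0 ν μ hμS (Ne.symm hνμ)]  -- careful: e ν evaluated at μ-point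
          ring
      · have hfx : eval (fun i => (μ i : ℚ)) f = 0 := by
          refine hf _ ⟨μ, ?_, rfl⟩
          simpa using not_lt.mp hcase
        rw [hfx]
        rw [Finset.sum_eq_zero, sub_zero]
        intro ν hν
        have hνμ : ν ≠ μ := by
          rintro rfl
          rw [hB, Finset.mem_filter] at hν
          exact hcase hν.2
        rw [map_mul, he0 ν μ hμS (Ne.symm hνμ), mul_zero]
    have := Jspan.add_mem hf' hsum
    simpa using this
  · -- easy direction
    rw [Ideal.span_le]
    rintro p hp
    rw [SetLike.mem_coe, mem_vanishingIdeal_iff]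
    rintro x ⟨lam, hlam, rfl⟩
    show MvPolynomial.eval _ _ = 0
    simp only [Set.mem_setOf_eq] at hlam
    rcases hp with ⟨i, rfl⟩ | ⟨eps, heps, rfl⟩
    · beta_reduce
      rw [pEq, map_prod]
      refine Finset.prod_eq_zero (i := lam i) ?_ ?_
      · rw [hS, Finset.mem_Icc]
        have h1 : |lam i| ≤ ∑ a, |lam a| :=
          Finset.single_le_sum (f := fun a => |lam a|) (fun a _ => abs_nonneg _)
            (Finset.mem_univ i)
        exact abs_le.mp (le_trans h1 hlam)
      · simp
    · beta_reduce
      rw [pEq, map_prod]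
      set m : ℤ := ∑ a, eps a * lam a with hm
      have habs : |m| ≤ (r:ℤ) := by
        calc |m| ≤ ∑ a, |eps a * lam a| := Finset.abs_sum_le_sum_abs _ _
        _ = ∑ a, |lam a| := by
            refine Finset.sum_congr rfl fun a _ => ?_
            rcases heps a with h | h <;> rw [h] <;> simp
        _ ≤ (r:ℤ) := hlam
      refine Finset.prod_eq_zero (i := m) ?_ ?_
      · rw [hS, Finset.mem_Icc]; exact abs_le.mp habs
      · have h2 : eval (fun a => (lam a : ℚ))
            (∑ a, MvPolynomial.C ((eps a : ℤ) : ℚ) * MvPolynomial.X a) = (m:ℚ) := by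
          rw [map_sum, hm]
          push_cast
          refine Finset.sum_congr rfl fun a _ => ?_
          simp
        rw [map_sub, eval_C, h2, sub_self]
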